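/- Let k be a commutative ring of characteristic zero. Fix positive integers a_0 < a_1 < ⋯ < a_n, block sizes c_0, …, c_n ≥ 1, and let R := k[x_{ij} : 0 ≤ i ≤ n, 1 ≤ j ≤ c_i] be the polynomial ring graded by wt(x_{ij}) = a_i. Let d ≥ 0 and let V_d be a k-submodule of the weighted-homogeneous degree-d part of R satisfying the nondegeneracy hypothesis: for every quotient ring k' of k, every b > 0, and every k'-derivation ∂' of weight −b of the subring k'[x_{ij} : i ≥ 1] in the variables of weight > a_0, if ∂' vanishes on the image V'_d of V_d (reduce coefficients along k → k' and set all weight-a_0 variables x_{0j} to 0), then ∂' = 0. Then if ∂ and D are k-derivations of R of weights −b and −b' respectively, with b, b' > 0, and both vanish on V_d, the commutator [∂, D] = ∂∘D − D∘∂ is the zero derivation; in other words the Lie algebra L := ∐_{b>0} L_{−b}(V_d) is abelian and concentrated in weight −a_0. (Paper's assertion (2.18).) -/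

import Mathlib

/-- The index set of the variables `x_{ij}`, `0 ≤ i ≤ n`, `1 ≤ j ≤ c i`:
blocks `i = 0,…,n` of sizes `c i`. -/
abbrev BlockIdx (n : ℕ) (c : Fin (n + 1) → ℕ) : Type := (i : Fin (n + 1)) × Fin (c i)

/-- The weight of the variable `x_{ij}` is `a i`. -/
def blockWt {n : ℕ} {c : Fin (n + 1) → ℕ} (a : Fin (n + 1) → ℕ) (s : BlockIdx n c) : ℤ :=
  a s.1

/-- A derivation of a graded polynomial ring (weights `w`) has weight `-b` if each `∂ x_s` is
weighted homogeneous of degree `w s - b` (hence zero when `w s - b < 0`, since all weights are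
nonnegative). -/
def DerivationHasWt {k : Type*} [CommRing k] {τ : Type*} (w : τ → ℤ) (b : ℤ)
    (der : Derivation k (MvPolynomial τ k) (MvPolynomial τ k)) : Prop :=
  ∀ s : τ, MvPolynomial.IsWeightedHomogeneous w (der (MvPolynomial.X s)) (w s - b)

/-- The ring map `k[x_{ij}] → k'[x_{ij} : i ≥ 1]`, reducing coefficients along the quotient
`k → k' = k ⧸ J` and setting the weight-`a 0` variables `x_{0j}` to `0`. -/
noncomputable def restrictBlocks {k : Type*} [CommRing k] (n : ℕ) (c : Fin (n + 1) → ℕ)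
    (J : Ideal k) :
    MvPolynomial (BlockIdx n c) k →+*
      MvPolynomial {s : BlockIdx n c // s.1 ≠ 0} (k ⧸ J) :=
  (MvPolynomial.aeval fun s : BlockIdx n c =>
      if h : s.1 = 0 then 0 else MvPolynomial.X (⟨s, h⟩ : {s : BlockIdx n c // s.1 ≠ 0})
    ).toRingHom.comp (MvPolynomial.map (Ideal.Quotient.mk J))


section AuxGeneral

open MvPolynomial

variable {k : Type*} [CommRing k] {τ : Type*} {w : τ → ℤ} {b : ℤ}
  {der : Derivation k (MvPolynomial τ k) (MvPolynomial τ k)}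

lemma aux_weight_single (s : τ) (e : ℕ) :
    Finsupp.weight w (Finsupp.single s e) = e • w s := by
  rw [Finsupp.weight_apply, Finsupp.sum_single_index]; simp

lemma aux_wh_nsmul {p : MvPolynomial τ k} {m : ℤ} (e : ℕ) (h : IsWeightedHomogeneous w p m) :
    IsWeightedHomogeneous w (e • p) m :=
  Submodule.smul_of_tower_mem (weightedHomogeneousSubmodule k w m) e
    ((mem_weightedHomogeneousSubmodule ..).2 h)

lemma aux_wh_pow (s : τ) (e : ℕ) :
    IsWeightedHomogeneous w ((X s : MvPolynomial τ k) ^ e) (e • w s) := by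
  induction e with
  | zero => simpa using isWeightedHomogeneous_one k w
  | succ m ih =>
      have := ih.mul (isWeightedHomogeneous_X k w s)
      rw [← pow_succ] at this
      convert this using 1
      ring

lemma aux_der_monomial_wt (hder : DerivationHasWt w b der) (d : τ →₀ ℕ) (r : k) :
    IsWeightedHomogeneous w (der (monomial d r)) (Finsupp.weight w d - b) := by
  induction d using Finsupp.induction generalizing r with
  | zero => simpa using isWeightedHomogeneous_zero ..
  | single_add s e d hs he ih =>
      rw [monomial_single_add, Derivation.leibniz]
      apply IsWeightedHomogeneous.add
      · rw [smul_eq_mul]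
        have := (aux_wh_pow s e).mul (ih r)
        convert this using 1
        rw [map_add, aux_weight_single]
        ring
      · rw [smul_eq_mul, Derivation.leibniz_pow, smul_eq_mul]
        have h1 := aux_wh_nsmul e ((aux_wh_pow s (e-1)).mul (hder s))
        have h2 := (isWeightedHomogeneous_monomial w d r rfl).mul h1
        convert h2 using 1
        rw [map_add, aux_weight_single]
        have he1 : ((e - 1 : ℕ) : ℤ) = (e : ℤ) - 1 := by omega
        simp only [nsmul_eq_mul, he1]
        ring

lemma aux_der_wt_apply (hder : DerivationHasWt w b der) {p : MvPolynomial τ k} {m : ℤ}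
    (hp : IsWeightedHomogeneous w p m) :
    IsWeightedHomogeneous w (der p) (m - b) := by
  rw [p.as_sum, map_sum]
  apply IsWeightedHomogeneous.sum
  intro d hd
  have := aux_der_monomial_wt hder d (coeff d p)
  rwa [hp (mem_support_iff.mp hd)] at this

lemma aux_homog_map {A B : Type*} [CommRing A] [CommRing B] (f : A →+* B) {υ : Type*}
    {w' : υ → ℤ} {p : MvPolynomial υ A} {m : ℤ} (h : IsWeightedHomogeneous w' p m) :
    IsWeightedHomogeneous w' (map f p) m := by
  intro d hd
  apply h
  intro h0
  rw [coeff_map, h0, map_zero] at hd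
  exact hd rfl

end AuxGeneral

section AuxCoeffMul

open MvPolynomial

variable {A : Type*} [CommRing A] {υ : Type*}

lemma aux_degree_lt_of_ne {γ δ α : υ →₀ ℕ} (h : γ + δ = α) (hne : δ ≠ α) :
    Finsupp.degree δ < Finsupp.degree α := by
  have hadd : Finsupp.degree γ + Finsupp.degree δ = Finsupp.degree α := by
    rw [← h, Finsupp.degree_eq_weight_one, map_add]
  have hγ : γ ≠ 0 := by
    rintro rfl
    simp at h
    exact hne h
  have : 0 < Finsupp.degree γ :=
    Nat.pos_of_ne_zero (fun h0 => hγ ((Finsupp.degree_eq_zero_iff γ).mp h0))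
  omega

lemma aux_coeff_mul_of_degree_le {P Q : MvPolynomial υ A} {N : ℕ}
    (hQ : ∀ δ : υ →₀ ℕ, coeff δ Q ≠ 0 → N ≤ Finsupp.degree δ)
    {α : υ →₀ ℕ} (hα : Finsupp.degree α = N) :
    coeff α (P * Q) = constantCoeff P * coeff α Q := by
  classical
  rw [coeff_mul]
  rw [Finset.sum_eq_single (0, α)]
  · simp [constantCoeff_eq]
  · rintro ⟨γ, δ⟩ hmem hne
    rw [Finset.HasAntidiagonal.mem_antidiagonal] at hmem
    show coeff γ P * coeff δ Q = 0
    by_cases hδ : δ = α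
    · subst hδ
      have : γ = 0 := by
        ext x
        have := DFunLike.congr_fun hmem x
        simp only [Finsupp.add_apply, Finsupp.coe_zero, Pi.zero_apply] at this ⊢
        omega
      simp [this] at hne
    · have hlt := aux_degree_lt_of_ne hmem hδ
      have : coeff δ Q = 0 := by
        by_contra hc
        have h1 : N ≤ Finsupp.degree δ := hQ δ hc
        have h2 : Finsupp.degree δ < N := by rw [← hα]; exact hlt
        omega
      simp [this]
  · intro h
    exact absurd (Finset.HasAntidiagonal.mem_antidiagonal.mpr (zero_add α)) h

lemma aux_degree_le_coeff_mul {P Q : MvPolynomial υ A} {N : ℕ}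
    (hQ : ∀ δ : υ →₀ ℕ, coeff δ Q ≠ 0 → N ≤ Finsupp.degree δ)
    {α : υ →₀ ℕ} (hc : coeff α (P * Q) ≠ 0) : N ≤ Finsupp.degree α := by
  classical
  by_contra hlt
  push_neg at hlt
  rw [coeff_mul] at hc
  apply hc
  apply Finset.sum_eq_zero
  rintro ⟨γ, δ⟩ hmem
  rw [Finset.HasAntidiagonal.mem_antidiagonal] at hmem
  show coeff γ P * coeff δ Q = 0
  have hd : Finsupp.degree γ + Finsupp.degree δ = Finsupp.degree α := by
    rw [← hmem, Finsupp.degree_eq_weight_one, map_add]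
  have : coeff δ Q = 0 := by
    by_contra hc2
    have := hQ δ hc2
    omega
  simp [this]

end AuxCoeffMul

section AuxSplit

open MvPolynomial

/-- The weight-`a 0` variables. -/
abbrev Zt (n : ℕ) (c : Fin (n + 1) → ℕ) := {s : BlockIdx n c // s.1 = 0}
/-- The higher-weight variables. -/
abbrev Pt (n : ℕ) (c : Fin (n + 1) → ℕ) := {s : BlockIdx n c // s.1 ≠ 0}

variable (k : Type*) [CommRing k] (n : ℕ) (c : Fin (n + 1) → ℕ)

/-- Splitting off the weight-`a 0` variables. -/
noncomputable def phiB :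
    MvPolynomial (BlockIdx n c) k →ₐ[k] MvPolynomial (Zt n c) (MvPolynomial (Pt n c) k) :=
  aeval fun s => if h : s.1 = 0 then X ⟨s, h⟩ else C (X ⟨s, h⟩)

/-- One-sided inverse of `phiB`. -/
noncomputable def psiB :
    MvPolynomial (Zt n c) (MvPolynomial (Pt n c) k) →+* MvPolynomial (BlockIdx n c) k :=
  eval₂Hom (aeval fun t : Pt n c => (X t.1 : MvPolynomial (BlockIdx n c) k)).toRingHom
    fun z => X z.1

variable {k n c}

noncomputable def dZ (d : BlockIdx n c →₀ ℕ) : Zt n c →₀ ℕ := d.subtypeDomain _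
noncomputable def dP (d : BlockIdx n c →₀ ℕ) : Pt n c →₀ ℕ := d.subtypeDomain _

lemma dZ_apply (d : BlockIdx n c →₀ ℕ) (z : Zt n c) : dZ d z = d z.1 := rfl
lemma dP_apply (d : BlockIdx n c →₀ ℕ) (z : Pt n c) : dP d z = d z.1 := rfl

lemma psiB_phiB (p : MvPolynomial (BlockIdx n c) k) : psiB k n c (phiB k n c p) = p := by
  have h : (psiB k n c).comp (phiB k n c).toRingHom = RingHom.id _ := by
    apply ringHom_ext
    · intro r
      simp [psiB, phiB, algebraMap_eq]
    · intro s
      by_cases h : s.1 = 0 <;> simp [psiB, phiB, h]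
  exact DFunLike.congr_fun h p

lemma phiB_injective (p : MvPolynomial (BlockIdx n c) k) (h : phiB k n c p = 0) : p = 0 := by
  have := psiB_phiB p
  rw [h, map_zero] at this
  exact this.symm

lemma restrictBlocks_eq (J : Ideal k) :
    restrictBlocks n c J = (map (Ideal.Quotient.mk J)).comp
      ((constantCoeff (R := MvPolynomial (Pt n c) k) (σ := Zt n c)).comp
        (phiB k n c).toRingHom) := by
  apply ringHom_ext
  · intro r
    simp [restrictBlocks, phiB, algebraMap_eq]
  · intro s
    by_cases h : s.1 = 0 <;> simp [restrictBlocks, phiB, h]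

lemma phiB_monomial (d : BlockIdx n c →₀ ℕ) (r : k) :
    phiB k n c (monomial d r) = C (monomial (dP d) r) * monomial (dZ d) 1 := by
  classical
  have hZ : (∏ x ∈ d.support.filter (fun x => x.1 = 0),
        (if h : x.1 = 0 then (X ⟨x, h⟩ : MvPolynomial (Zt n c) (MvPolynomial (Pt n c) k))
          else C (X ⟨x, h⟩)) ^ d x)
      = ∏ a ∈ (dZ d).support, X a ^ (dZ d) a := by
    apply Finset.prod_bij (fun (x : BlockIdx n c) hx => (⟨x, (Finset.mem_filter.mp hx).2⟩ : Zt n c))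
    · intro x hx
      simp only [Finsupp.mem_support_iff, dZ_apply]
      exact Finsupp.mem_support_iff.mp (Finset.mem_filter.mp hx).1
    · intro x hx y hy hxy
      simpa [Subtype.ext_iff] using hxy
    · intro a ha
      refine ⟨a.1, Finset.mem_filter.mpr ⟨?_, a.2⟩, ?_⟩
      · simpa [Finsupp.mem_support_iff, dZ_apply] using ha
      · simp
    · intro x hx
      rw [dif_pos (Finset.mem_filter.mp hx).2]
      congr 1
  have hP : (∏ x ∈ d.support.filter (fun x => ¬ x.1 = 0),
        (if h : x.1 = 0 then (X ⟨x, h⟩ : MvPolynomial (Zt n c) (MvPolynomial (Pt n c) k))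
          else C (X ⟨x, h⟩)) ^ d x)
      = C (∏ a ∈ (dP d).support, X a ^ (dP d) a) := by
    rw [map_prod]
    apply Finset.prod_bij
      (fun (x : BlockIdx n c) hx => (⟨x, (Finset.mem_filter.mp hx).2⟩ : Pt n c))
    · intro x hx
      simp only [Finsupp.mem_support_iff, dP_apply]
      exact Finsupp.mem_support_iff.mp (Finset.mem_filter.mp hx).1
    · intro x hx y hy hxy
      simpa [Subtype.ext_iff] using hxy
    · intro a ha
      refine ⟨a.1, Finset.mem_filter.mpr ⟨?_, a.2⟩, ?_⟩
      · simpa [Finsupp.mem_support_iff, dP_apply] using ha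
      · simp
    · intro x hx
      rw [dif_neg (Finset.mem_filter.mp hx).2, map_pow]
      congr 1
  rw [phiB, aeval_monomial, monomial_eq, monomial_eq, Finsupp.prod, Finsupp.prod, Finsupp.prod,
    ← Finset.prod_filter_mul_prod_filter_not d.support (fun s => s.1 = 0), hZ, hP,
    show algebraMap k (MvPolynomial (Zt n c) (MvPolynomial (Pt n c) k)) r = C (C r) from rfl,
    map_mul, C_1]
  ring

variable {a : Fin (n + 1) → ℕ}

lemma weight_split (a : Fin (n + 1) → ℕ) (d : BlockIdx n c →₀ ℕ) :
    Finsupp.weight (blockWt a) d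
      = (a 0 : ℤ) * ((Finsupp.degree (dZ d) : ℕ) : ℤ)
        + Finsupp.weight (fun t : Pt n c => (a t.1.1 : ℤ)) (dP d) := by
  classical
  rw [Finsupp.weight_apply, Finsupp.sum]
  rw [← Finset.sum_filter_add_sum_filter_not d.support (fun x => x.1 = 0)]
  congr 1
  · have hbij : ∑ x ∈ d.support.filter (fun x => x.1 = 0), d x • blockWt a x
        = ∑ z ∈ (dZ d).support, (dZ d) z • (a 0 : ℤ) := by
      apply Finset.sum_bij (fun (x : BlockIdx n c) hx => (⟨x, (Finset.mem_filter.mp hx).2⟩ : Zt n c))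
      · intro x hx
        simp only [Finsupp.mem_support_iff, dZ, Finsupp.subtypeDomain_apply]
        exact Finsupp.mem_support_iff.mp (Finset.mem_filter.mp hx).1
      · intro x hx y hy hxy
        simpa [Subtype.ext_iff] using hxy
      · intro z hz
        refine ⟨z.1, Finset.mem_filter.mpr ⟨?_, z.2⟩, by simp⟩
        simpa [Finsupp.mem_support_iff, dZ, Finsupp.subtypeDomain_apply] using hz
      · intro x hx
        have h0 := (Finset.mem_filter.mp hx).2
        have ha0 : a x.fst = a 0 := by rw [h0]
        rw [blockWt, ha0]
        rfl
    rw [hbij]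
    have hsm : ∀ z ∈ (dZ d).support, (dZ d) z • (a 0 : ℤ) = ((dZ d) z : ℤ) * (a 0 : ℤ) := by
      intros; rw [nsmul_eq_mul]
    rw [Finset.sum_congr rfl hsm, ← Finset.sum_mul, mul_comm, Finsupp.degree]
    push_cast
    exact congrArg (fun x : ℤ => (a 0 : ℤ) * x) (Nat.cast_sum (dZ d).support (dZ d)).symm
  · rw [Finsupp.weight_apply, Finsupp.sum]
    apply Finset.sum_bij (fun (x : BlockIdx n c) hx => (⟨x, (Finset.mem_filter.mp hx).2⟩ : Pt n c))
    · intro x hx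
      simp only [Finsupp.mem_support_iff, dP, Finsupp.subtypeDomain_apply]
      exact Finsupp.mem_support_iff.mp (Finset.mem_filter.mp hx).1
    · intro x hx y hy hxy
      simpa [Subtype.ext_iff] using hxy
    · intro t ht
      refine ⟨t.1, Finset.mem_filter.mpr ⟨?_, t.2⟩, by simp⟩
      simpa [Finsupp.mem_support_iff, dP, Finsupp.subtypeDomain_apply] using ht
    · intro x hx
      rfl

lemma coeff_phiB_homog {p : MvPolynomial (BlockIdx n c) k} {m : ℤ}
    (hp : IsWeightedHomogeneous (blockWt a) p m) (α : Zt n c →₀ ℕ) :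
    IsWeightedHomogeneous (fun t : Pt n c => (a t.1.1 : ℤ)) (coeff α (phiB k n c p))
      (m - (a 0 : ℤ) * ((Finsupp.degree α : ℕ) : ℤ)) := by
  classical
  rw [p.as_sum, map_sum, coeff_sum]
  apply IsWeightedHomogeneous.sum
  intro v hv
  rw [phiB_monomial, coeff_C_mul, coeff_monomial]
  by_cases h : dZ v = α
  · rw [if_pos h, mul_one]
    apply isWeightedHomogeneous_monomial
    have h1 : Finsupp.weight (blockWt a) v = m := hp (mem_support_iff.mp hv)
    have h2 := weight_split a v
    rw [h1, h] at h2
    linarith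
  · rw [if_neg h, mul_zero]
    exact isWeightedHomogeneous_zero ..

end AuxSplit


/-- **Paper's assertion (2.18)**: the Lie algebra `L = ∐_{b>0} L_{-b}(V_d)` is abelian (and
concentrated in weight `-a 0`).  Under the nondegeneracy hypothesis II.c, if `∂` and `D` are
`k`-derivations of weights `-b` and `-b'` (`b, b' > 0`) both vanishing on `V_d`, then their
commutator `⁅∂, D⁆ = ∂ ∘ D - D ∘ ∂` is the zero derivation. -/
theorem assertion_2_18 (k : Type*) [CommRing k] [CharZero k]
    (n : ℕ) (c : Fin (n + 1) → ℕ) (hc : ∀ i, 1 ≤ c i)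
    (a : Fin (n + 1) → ℕ) (ha : StrictMono a) (ha0 : 0 < a 0)
    (d : ℕ)
    (V : Submodule k (MvPolynomial (BlockIdx n c) k))
    (hV : ∀ f ∈ V, MvPolynomial.IsWeightedHomogeneous (blockWt a) f (d : ℤ))
    (hnd : ∀ (J : Ideal k) (b : ℕ), 0 < b →
      ∀ der : Derivation (k ⧸ J) (MvPolynomial {s : BlockIdx n c // s.1 ≠ 0} (k ⧸ J))
          (MvPolynomial {s : BlockIdx n c // s.1 ≠ 0} (k ⧸ J)),
        DerivationHasWt (fun t : {s : BlockIdx n c // s.1 ≠ 0} => (a t.1.1 : ℤ)) (b : ℤ) der →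
        (∀ f ∈ V, der (restrictBlocks n c J f) = 0) → der = 0) :
    ∀ b b' : ℕ, 0 < b → 0 < b' →
      ∀ der₁ der₂ :
          Derivation k (MvPolynomial (BlockIdx n c) k) (MvPolynomial (BlockIdx n c) k),
        DerivationHasWt (blockWt a) (b : ℤ) der₁ →
        DerivationHasWt (blockWt a) (b' : ℤ) der₂ →
        (∀ f ∈ V, der₁ f = 0) → (∀ f ∈ V, der₂ f = 0) →
        ⁅der₁, der₂⁆ = 0 := by
  classical
  intro b b' hb hb' der₁ der₂ hwt₁ hwt₂ hV₁ hV₂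
  open MvPolynomial in
  set E : Derivation k (MvPolynomial (BlockIdx n c) k) (MvPolynomial (BlockIdx n c) k) :=
    ⁅der₁, der₂⁆ with hEdef
  have hEapply : ∀ p, E p = der₁ (der₂ p) - der₂ (der₁ p) := fun p => rfl
  -- weights are at least `a 0` and nonnegative
  have hwlow : ∀ s : BlockIdx n c, (a 0 : ℤ) ≤ blockWt a s := by
    intro s
    have := ha.monotone (Fin.zero_le s.1)
    rw [blockWt]
    exact_mod_cast this
  have hwnn : ∀ s : BlockIdx n c, 0 ≤ blockWt a s := by
    intro s
    have h0 : (0:ℤ) ≤ (a 0 : ℤ) := by positivity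
    exact le_trans h0 (hwlow s)
  -- low-degree homogeneous polynomials are constants
  have hconst : ∀ (p : MvPolynomial (BlockIdx n c) k) (m : ℤ),
      MvPolynomial.IsWeightedHomogeneous (blockWt a) p m → m < (a 0 : ℤ) → ∃ r, p = MvPolynomial.C r := by
    intro p m hp hm
    refine ⟨MvPolynomial.coeff 0 p, ?_⟩
    apply MvPolynomial.ext
    intro dd
    rw [MvPolynomial.coeff_C]
    by_cases h : (0 : BlockIdx n c →₀ ℕ) = dd
    · rw [if_pos h, ← h]
    · rw [if_neg h]
      by_contra hcd
      have hwd : Finsupp.weight (blockWt a) dd = m := hp hcd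
      have hdd : dd ≠ 0 := fun h0 => h (h0.symm)
      obtain ⟨s, hs⟩ := Finsupp.support_nonempty_iff.mpr hdd
      have hsne : dd s ≠ 0 := Finsupp.mem_support_iff.mp hs
      have hge : blockWt a s ≤ Finsupp.weight (blockWt a) dd :=
        Finsupp.le_weight_of_ne_zero hwnn hsne
      have := hwlow s
      omega
  -- E kills the weight-`a 0` variables
  have hEzero : ∀ s : BlockIdx n c, s.1 = 0 → E (MvPolynomial.X s) = 0 := by
    intro s hs
    have hw0 : blockWt a s = (a 0 : ℤ) := by
      rw [blockWt, hs]
    have h2 : ∃ r, der₂ (MvPolynomial.X s) = MvPolynomial.C r := by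
      refine hconst _ _ (hwt₂ s) ?_
      rw [hw0]; omega
    have h1 : ∃ r, der₁ (MvPolynomial.X s) = MvPolynomial.C r := by
      refine hconst _ _ (hwt₁ s) ?_
      rw [hw0]; omega
    obtain ⟨r2, h2⟩ := h2
    obtain ⟨r1, h1⟩ := h1
    rw [hEapply, h1, h2, ← MvPolynomial.algebraMap_eq,
      Derivation.map_algebraMap, Derivation.map_algebraMap, sub_zero]
  -- E vanishes on V
  have hEV : ∀ f ∈ V, E f = 0 := by
    intro f hf
    rw [hEapply, hV₂ f hf, hV₁ f hf, map_zero, map_zero, sub_zero]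
  -- E values are homogeneous
  have hEwt : ∀ s : BlockIdx n c,
      MvPolynomial.IsWeightedHomogeneous (blockWt a) (E (MvPolynomial.X s))
        (blockWt a s - ((b : ℤ) + b')) := by
    intro s
    rw [hEapply]
    have h2 : MvPolynomial.IsWeightedHomogeneous (blockWt a) (der₁ (der₂ (MvPolynomial.X s)))
        (blockWt a s - ((b : ℤ) + b')) := by
      have := aux_der_wt_apply hwt₁ (hwt₂ s)
      convert this using 1
      ring
    have h1 : MvPolynomial.IsWeightedHomogeneous (blockWt a) (der₂ (der₁ (MvPolynomial.X s)))
        (blockWt a s - ((b : ℤ) + b')) := by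
      have := aux_der_wt_apply hwt₂ (hwt₁ s)
      convert this using 1
      ring
    exact (MvPolynomial.mem_weightedHomogeneousSubmodule ..).1
      (sub_mem ((MvPolynomial.mem_weightedHomogeneousSubmodule ..).2 h2)
        ((MvPolynomial.mem_weightedHomogeneousSubmodule ..).2 h1))
  -- the main induction: every coefficient of `phiB (E (X s))` has arbitrarily large
  -- degree in the weight-`a 0` variables
  have main : ∀ N : ℕ, ∀ s : BlockIdx n c, ∀ δ : Zt n c →₀ ℕ,
      MvPolynomial.coeff δ (phiB k n c (E (MvPolynomial.X s))) ≠ 0 → N ≤ Finsupp.degree δ := by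
    intro N
    induction N with
    | zero => intro s δ _; exact Nat.zero_le _
    | succ N ihN =>
      -- all values of E satisfy the degree-N bound
      have hall : ∀ p : MvPolynomial (BlockIdx n c) k, ∀ δ : Zt n c →₀ ℕ,
          MvPolynomial.coeff δ (phiB k n c (E p)) ≠ 0 → N ≤ Finsupp.degree δ := by
        intro p
        induction p using MvPolynomial.induction_on with
        | C r =>
            intro δ h
            rw [← MvPolynomial.algebraMap_eq, Derivation.map_algebraMap, map_zero] at h
            simp at h
        | add p q ihp ihq =>
            intro δ h
            rw [map_add, map_add, MvPolynomial.coeff_add] at h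
            rcases (by by_contra hc; push_neg at hc; rw [hc.1, hc.2] at h; simp at h :
              MvPolynomial.coeff δ (phiB k n c (E p)) ≠ 0 ∨
              MvPolynomial.coeff δ (phiB k n c (E q)) ≠ 0) with h' | h'
            · exact ihp δ h'
            · exact ihq δ h'
        | mul_X p s ihp =>
            intro δ h
            rw [Derivation.leibniz, smul_eq_mul, smul_eq_mul, map_add, map_mul, map_mul,
              MvPolynomial.coeff_add] at h
            rcases (by by_contra hc; push_neg at hc; rw [hc.1, hc.2] at h; simp at h :
              MvPolynomial.coeff δ (phiB k n c p * phiB k n c (E (MvPolynomial.X s))) ≠ 0 ∨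
              MvPolynomial.coeff δ (phiB k n c (MvPolynomial.X s) * phiB k n c (E p)) ≠ 0)
              with h' | h'
            · exact aux_degree_le_coeff_mul (fun δ' => ihN s δ') h'
            · exact aux_degree_le_coeff_mul (fun δ' => ihp δ') h'
      -- kill all coefficients in degree exactly N, using the nondegeneracy hypothesis
      have hstep : ∀ α : Zt n c →₀ ℕ, Finsupp.degree α = N → ∀ s : BlockIdx n c,
          MvPolynomial.coeff α (phiB k n c (E (MvPolynomial.X s))) = 0 := by
        intro α hα
        set q : k →+* k ⧸ (⊥ : Ideal k) := Ideal.Quotient.mk ⊥ with hq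
        have hqinj : Function.Injective q :=
          (RingHom.injective_iff_ker_eq_bot q).mpr Ideal.mk_ker
        set Tα : MvPolynomial (BlockIdx n c) k → MvPolynomial (Pt n c) (k ⧸ (⊥ : Ideal k)) :=
          fun p => MvPolynomial.map q (MvPolynomial.coeff α (phiB k n c p)) with hTα
        set G : Derivation (k ⧸ (⊥ : Ideal k)) (MvPolynomial (Pt n c) (k ⧸ (⊥ : Ideal k)))
            (MvPolynomial (Pt n c) (k ⧸ (⊥ : Ideal k))) :=
          MvPolynomial.mkDerivation _ (fun t : Pt n c => Tα (E (MvPolynomial.X t.1))) with hG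
        have hrest : ∀ p : MvPolynomial (BlockIdx n c) k,
            restrictBlocks n c ⊥ p
              = MvPolynomial.map q (MvPolynomial.constantCoeff (phiB k n c p)) := by
          intro p
          rw [restrictBlocks_eq]
          rfl
        have hTadd : ∀ p₁ p₂, Tα (p₁ + p₂) = Tα p₁ + Tα p₂ := by
          intro p₁ p₂
          rw [hTα]
          simp only [map_add, MvPolynomial.coeff_add]
        have hTmul : ∀ (p h : MvPolynomial (BlockIdx n c) k),
            (∀ δ : Zt n c →₀ ℕ, MvPolynomial.coeff δ (phiB k n c h) ≠ 0 → N ≤ Finsupp.degree δ) →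
            Tα (p * h) = restrictBlocks n c ⊥ p * Tα h := by
          intro p h hh
          rw [hTα]
          simp only
          rw [show phiB k n c (p * h) = phiB k n c p * phiB k n c h from map_mul _ _ _,
            aux_coeff_mul_of_degree_le hh hα,
            show MvPolynomial.map q (MvPolynomial.constantCoeff (phiB k n c p)
                * MvPolynomial.coeff α (phiB k n c h))
              = MvPolynomial.map q (MvPolynomial.constantCoeff (phiB k n c p))
                * MvPolynomial.map q (MvPolynomial.coeff α (phiB k n c h)) from map_mul _ _ _,
            hrest]
        have hGX : ∀ s : BlockIdx n c,
            G (restrictBlocks n c ⊥ (MvPolynomial.X s : MvPolynomial (BlockIdx n c) k))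
              = Tα (E (MvPolynomial.X s)) := by
          intro s
          by_cases h : s.1 = 0
          · have h1 : restrictBlocks n c ⊥ (MvPolynomial.X s : MvPolynomial (BlockIdx n c) k)
                = 0 := by
              simp [restrictBlocks, h]
            rw [h1, map_zero, hEzero s h]
            simp [hTα]
          · have h1 : restrictBlocks n c ⊥ (MvPolynomial.X s : MvPolynomial (BlockIdx n c) k)
                = MvPolynomial.X (⟨s, h⟩ : Pt n c) := by
              simp [restrictBlocks, h]
            rw [h1, hG, MvPolynomial.mkDerivation_X]
        have hkey : ∀ p : MvPolynomial (BlockIdx n c) k,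
            G (restrictBlocks n c ⊥ p) = Tα (E p) := by
          intro p
          induction p using MvPolynomial.induction_on with
          | C r =>
              have h1 : restrictBlocks n c ⊥ (MvPolynomial.C r) = MvPolynomial.C (q r) := by
                simp [restrictBlocks, hq]
              rw [h1, ← MvPolynomial.algebraMap_eq, Derivation.map_algebraMap,
                ← MvPolynomial.algebraMap_eq, Derivation.map_algebraMap]
              simp [hTα]
          | add p₁ p₂ ih₁ ih₂ =>
              rw [map_add, map_add, map_add, hTadd, ih₁, ih₂]
          | mul_X p s ihp =>
              rw [map_mul, Derivation.leibniz, smul_eq_mul, smul_eq_mul,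
                Derivation.leibniz, smul_eq_mul, smul_eq_mul, hTadd,
                hTmul p (E (MvPolynomial.X s)) (fun δ' => ihN s δ'),
                hTmul (MvPolynomial.X s) (E p) (fun δ' => hall p δ'), hGX, ihp]
        -- G has the right weight
        have hGwt : DerivationHasWt (fun t : Pt n c => (a t.1.1 : ℤ))
            ((b + b' + N * a 0 : ℕ) : ℤ) G := by
          intro t
          rw [hG, MvPolynomial.mkDerivation_X]
          have h1 := coeff_phiB_homog (a := a) (hEwt t.1) α
          have h2 := aux_homog_map q h1
          convert h2 using 1
          rw [hα, blockWt]
          push_cast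
          ring
        -- G vanishes on the image of V
        have hGvan : ∀ f ∈ V, G (restrictBlocks n c ⊥ f) = 0 := by
          intro f hf
          rw [hkey, hEV f hf]
          simp [hTα]
        -- apply nondegeneracy
        have hbpos : 0 < b + b' + N * a 0 := by positivity
        have hG0 := hnd ⊥ (b + b' + N * a 0) hbpos G hGwt hGvan
        intro s
        by_cases h : s.1 = 0
        · rw [hEzero s h]
          simp
        · have h1 : G (MvPolynomial.X (⟨s, h⟩ : Pt n c)) = 0 := by
            rw [hG0]; rfl
          rw [hG, MvPolynomial.mkDerivation_X] at h1
          have h2 : Tα (E (MvPolynomial.X s)) = MvPolynomial.map q 0 := by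
            rw [h1, map_zero]
          exact MvPolynomial.map_injective q hqinj h2
      intro s δ hδ
      have h1 := ihN s δ hδ
      rcases Nat.lt_or_ge N (Finsupp.degree δ) with h | h
      · omega
      · have hNδ : Finsupp.degree δ = N := le_antisymm (by omega) h1
        exact absurd (hstep δ hNδ s) hδ
  -- conclude
  have hEX : ∀ s : BlockIdx n c, E (MvPolynomial.X s) = 0 := by
    intro s
    apply phiB_injective
    apply MvPolynomial.ext
    intro δ
    rw [MvPolynomial.coeff_zero]
    by_contra hδ
    have := main (Finsupp.degree δ + 1) s δ hδ
    omega
  apply MvPolynomial.derivation_ext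
  intro s
  rw [hEX s]
  rfl
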